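/- The set of binary quadratic forms {[a, b, 0] : 0 ≤ a < b}, i.e. forms a·x² + b·x·y with 0 ≤ a < b, is a complete set of representatives for the PSL₂(ℤ)-equivalence classes of integral binary quadratic forms of discriminant d = b², where b is a positive integer. -/

import Mathlib

open scoped Real
open Complex

/-- The special linear group `SL(2, ℤ)`. -/
abbrev SL2Z := Matrix.SpecialLinearGroup (Fin 2) ℤ

/-- Evaluation of the binary quadratic form `[a,b,c]` at `(x,y)`. -/
def evalQF (Q : ℤ × ℤ × ℤ) (x y : ℤ) : ℤ := Q.1 * x ^ 2 + Q.2.1 * x * y + Q.2.2 * y ^ 2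

/-- Discriminant of a binary quadratic form. -/
def discQF (Q : ℤ × ℤ × ℤ) : ℤ := Q.2.1 ^ 2 - 4 * Q.1 * Q.2.2

/-- Action of `SL(2,ℤ)` on binary quadratic forms: `(γQ)(x,y) = Q(Dx - By, -Cx + Ay)`. -/
def actQF (γ : SL2Z) (Q : ℤ × ℤ × ℤ) : ℤ × ℤ × ℤ :=
  (Q.1 * (γ.1 1 1) ^ 2 - Q.2.1 * (γ.1 1 0) * (γ.1 1 1) + Q.2.2 * (γ.1 1 0) ^ 2,
   -2 * Q.1 * (γ.1 0 1) * (γ.1 1 1) + Q.2.1 * ((γ.1 0 0) * (γ.1 1 1) + (γ.1 0 1) * (γ.1 1 0))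
     - 2 * Q.2.2 * (γ.1 0 0) * (γ.1 1 0),
   Q.1 * (γ.1 0 1) ^ 2 - Q.2.1 * (γ.1 0 0) * (γ.1 0 1) + Q.2.2 * (γ.1 0 0) ^ 2)

/-- Two forms are `PSL₂(ℤ)`-equivalent. -/
def EquivQF (Q Q' : ℤ × ℤ × ℤ) : Prop := ∃ γ : SL2Z, actQF γ Q = Q'

/-- Two forms are `Γ∞`-equivalent. -/
def GammaInfEquivQF (Q Q' : ℤ × ℤ × ℤ) : Prop :=
  ∃ γ : SL2Z, γ.1 1 0 = 0 ∧ actQF γ Q = Q'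

lemma actQF_one (Q : ℤ × ℤ × ℤ) : actQF 1 Q = Q := by
  obtain ⟨a, b, c⟩ := Q
  simp [actQF, Matrix.SpecialLinearGroup.coe_one, Matrix.one_apply]

lemma actQF_mul (γ δ : SL2Z) (Q : ℤ × ℤ × ℤ) :
    actQF (γ * δ) Q = actQF γ (actQF δ Q) := by
  obtain ⟨a, b, c⟩ := Q
  simp only [actQF, Matrix.SpecialLinearGroup.coe_mul, Matrix.mul_apply, Fin.sum_univ_two,
    Prod.mk.injEq]
  refine ⟨by ring, by ring, by ring⟩

lemma SL2Z_inv_c (γ : SL2Z) : (γ⁻¹).1 1 0 = -(γ.1 1 0) := by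
  rw [Matrix.SpecialLinearGroup.coe_inv, Matrix.adjugate_fin_two]
  simp

lemma discQF_actQF (γ : SL2Z) (Q : ℤ × ℤ × ℤ) : discQF (actQF γ Q) = discQF Q := by
  have h := γ.2
  rw [Matrix.det_fin_two] at h
  obtain ⟨a, b, c⟩ := Q
  simp only [discQF, actQF]
  linear_combination (γ.1 0 0 * γ.1 1 1 - γ.1 0 1 * γ.1 1 0 + 1) * (b ^ 2 - 4 * a * c) * h

/-- `Γ∞ ≤ SL(2,ℤ)`: matrices with lower-left entry zero. -/
def GammaInf : Subgroup SL2Z where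
  carrier := {γ | γ.1 1 0 = 0}
  one_mem' := by simp [Matrix.SpecialLinearGroup.coe_one, Matrix.one_apply]
  mul_mem' := by
    intro γ δ hγ hδ
    simp only [Set.mem_setOf_eq, Matrix.SpecialLinearGroup.coe_mul, Matrix.mul_apply,
      Fin.sum_univ_two] at *
    rw [hδ] at *
    simp [hγ, hδ]
  inv_mem' := by
    intro γ hγ
    simp only [Set.mem_setOf_eq] at *
    rw [SL2Z_inv_c, hγ, neg_zero]

/-- Möbius action of `SL(2,ℤ)` on `ℂ`. -/
noncomputable def moeb (γ : SL2Z) (τ : ℂ) : ℂ :=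
  ((γ.1 0 0 : ℂ) * τ + (γ.1 0 1 : ℂ)) / ((γ.1 1 0 : ℂ) * τ + (γ.1 1 1 : ℂ))

/-- `e(x) = e^{2πix}`. -/
noncomputable def ee (x : ℝ) : ℂ := Complex.exp (2 * π * Complex.I * x)

/-- `ε_a`. -/
noncomputable def epsFactor (a : ℕ) : ℂ := if a % 4 = 1 then 1 else Complex.I

/-- The modified Kloosterman sum `K⁺(d, D; 4c)`. -/
noncomputable def KloostermanPlus (d D : ℤ) (c : ℕ) : ℂ :=
  (1 - Complex.I) * (if c % 2 = 0 then 1 else 2) *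
    ∑ a ∈ Finset.range (4 * c), if Nat.gcd a (4 * c) = 1 then
      (jacobiSym (4 * c : ℤ) a : ℂ) * epsFactor a *
        ee (((d * a + D * ((a ^ (Nat.totient (4 * c) - 1)) % (4 * c) : ℕ) : ℤ) : ℝ) / (4 * c))
    else 0

/-- The Kronecker symbol `(D/n)`. -/
def kron (D : ℤ) (n : ℕ) : ℤ :=
  (if D % 2 = 0 then 0 else if D % 8 = 1 ∨ D % 8 = 7 then 1 else -1) ^ (n.factorization 2) *
    jacobiSym D (n / 2 ^ (n.factorization 2))

/-- `D` is a positive fundamental discriminant. -/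
def IsFundDisc (D : ℤ) : Prop :=
  0 < D ∧ ((D % 4 = 1 ∧ Squarefree D) ∨
    (D % 4 = 0 ∧ Squarefree (D / 4) ∧ ((D / 4) % 4 = 2 ∨ (D / 4) % 4 = 3)))

/-- The modified Bessel function of the first kind `I_ν`, of a real argument. -/
noncomputable def besselI (ν : ℂ) (x : ℝ) : ℂ :=
  ∑' k : ℕ, ((x : ℂ) / 2) ^ (ν + 2 * k) / ((Nat.factorial k : ℂ) * Complex.Gamma (ν + k + 1))

/-- The Bessel function of the first kind `J_ν`, of a real argument. -/
noncomputable def besselJ (ν : ℂ) (x : ℝ) : ℂ :=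
  ∑' k : ℕ, (-1) ^ k * ((x : ℂ) / 2) ^ (ν + 2 * k) /
    ((Nat.factorial k : ℂ) * Complex.Gamma (ν + k + 1))

/-- The `c`-th term of the Kloosterman–Bessel series `b(d,D,s)`. -/
noncomputable def bterm (d D : ℤ) (s : ℂ) (c : ℕ) : ℂ :=
  if d * D ≠ 0 then
    KloostermanPlus d D c * (2 : ℂ) ^ (-(3 : ℂ) / 2) * (π : ℂ) *
      ((d * D : ℤ) : ℂ) ^ ((1 : ℂ) / 4) * (c : ℂ)⁻¹ *
      besselJ (2 * s - 1) (π * Real.sqrt ((d * D : ℤ) : ℝ) / c)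
  else if d + D ≠ 0 then
    KloostermanPlus d D c * (2 : ℂ) ^ (-(4 : ℂ) * s) * (π : ℂ) ^ (s + 1 / 4) *
      ((d + D : ℤ) : ℂ) ^ (s - 1 / 4) * (c : ℂ) ^ (-2 * s)
  else
    KloostermanPlus 0 0 c * (2 : ℂ) ^ ((1 : ℂ) / 2 - 6 * s) * (π : ℂ) ^ ((1 : ℂ) / 2) *
      Complex.Gamma (2 * s) * (c : ℂ) ^ (-2 * s)

/-- The coefficient function `b(d, D, s)`. -/
noncomputable def bcoef (d D : ℤ) (s : ℂ) : ℂ := ∑' c : ℕ, bterm d D s (c + 1)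

/-- The Dirichlet `L`-function `L_D(s)`. -/
noncomputable def LDir (D : ℤ) (s : ℂ) : ℂ :=
  ∑' n : ℕ, (kron D (n + 1) : ℂ) * ((n + 1 : ℕ) : ℂ) ^ (-s)

/-- `σ_w(m) = Σ_{n ∣ m} n^w`. -/
noncomputable def sigmaC (w : ℂ) (m : ℕ) : ℂ := ∑ n ∈ m.divisors, (n : ℂ) ^ w

/-- `φ_{m,s}(y) = 2π m^{1/2} y^{1/2} I_{s-1/2}(2πmy)`. -/
noncomputable def phiMS (m : ℕ) (s : ℂ) (y : ℝ) : ℂ :=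
  2 * π * Real.sqrt (m * y) * besselI (s - 1 / 2) (2 * π * m * y)

/-- The cosets in `Γ∞\Γ` corresponding to the (rational or infinite) roots of `Q`. -/
def rootCosets (Q : ℤ × ℤ × ℤ) : Set (Quotient (QuotientGroup.rightRel GammaInf)) :=
  {q | ∃ (γ : SL2Z) (r s : ℤ), q = Quotient.mk _ γ ∧ γ.1 1 0 = s ∧ γ.1 1 1 = -r ∧
    evalQF Q r s = 0}

/-- `Γ`-equivalence as a setoid on forms of discriminant `d`. -/
def sGQ (d : ℤ) : Setoid {Q : ℤ × ℤ × ℤ // discQF Q = d} where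
  r Q Q' := ∃ γ : SL2Z, actQF γ Q.val = Q'.val
  iseqv := by
    constructor
    · exact fun Q => ⟨1, actQF_one Q.val⟩
    · rintro Q Q' ⟨γ, hγ⟩
      exact ⟨γ⁻¹, by rw [← hγ, ← actQF_mul, inv_mul_cancel, actQF_one]⟩
    · rintro Q Q' Q'' ⟨γ, hγ⟩ ⟨δ, hδ⟩
      exact ⟨δ * γ, by rw [actQF_mul, hγ, hδ]⟩

/-- `Γ∞`-equivalence as a setoid on forms of discriminant `d`. -/
def sGIQ (d : ℤ) : Setoid {Q : ℤ × ℤ × ℤ // discQF Q = d} where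
  r Q Q' := ∃ γ : SL2Z, γ.1 1 0 = 0 ∧ actQF γ Q.val = Q'.val
  iseqv := by
    constructor
    · exact fun Q => ⟨1, by simp [Matrix.SpecialLinearGroup.coe_one, Matrix.one_apply],
        actQF_one Q.val⟩
    · rintro Q Q' ⟨γ, hc, hγ⟩
      exact ⟨γ⁻¹, by rw [SL2Z_inv_c, hc, neg_zero],
        by rw [← hγ, ← actQF_mul, inv_mul_cancel, actQF_one]⟩
    · rintro Q Q' Q'' ⟨γ, hcγ, hγ⟩ ⟨δ, hcδ, hδ⟩
      refine ⟨δ * γ, ?_, by rw [actQF_mul, hγ, hδ]⟩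
      simp [Matrix.SpecialLinearGroup.coe_mul, Matrix.mul_apply, Fin.sum_univ_two, hcγ, hcδ]

def mk2 (x y z w : ℤ) (h : x * w - y * z = 1) : SL2Z :=
  ⟨!![x, y; z, w], by simpa [Matrix.det_fin_two_of] using h⟩

lemma actQF_mk2 (x y z w : ℤ) (h : x * w - y * z = 1) (A B C : ℤ) :
    actQF (mk2 x y z w h) (A, B, C) =
      (A * w ^ 2 - B * z * w + C * z ^ 2,
       -2 * A * y * w + B * (x * w + y * z) - 2 * C * x * z,
       A * y ^ 2 - B * x * y + C * x ^ 2) := by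
  simp [actQF, mk2]

lemma equivQF_symm {Q Q' : ℤ × ℤ × ℤ} (h : EquivQF Q Q') : EquivQF Q' Q := by
  obtain ⟨γ, hγ⟩ := h
  exact ⟨γ⁻¹, by rw [← hγ, ← actQF_mul, inv_mul_cancel, actQF_one]⟩

lemma equivQF_trans {Q Q' Q'' : ℤ × ℤ × ℤ} (h : EquivQF Q Q') (h' : EquivQF Q' Q'') :
    EquivQF Q Q'' := by
  obtain ⟨γ, hγ⟩ := h; obtain ⟨δ, hδ⟩ := h'
  exact ⟨δ * γ, by rw [actQF_mul, hγ, hδ]⟩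

/-- Shift: (A, b, 0) ~ (A - b n, b, 0). -/
lemma shiftQF (A b n : ℤ) : EquivQF (A, b, 0) (A - b * n, b, 0) := by
  refine ⟨mk2 1 0 n 1 (by ring), ?_⟩
  rw [actQF_mk2]
  refine Prod.ext (by ring) (Prod.ext (by ring) (by ring))

/-- A primitive root gives an equivalent form with last coefficient 0. -/
lemma equiv_of_root {Q : ℤ × ℤ × ℤ} {r s : ℤ} (hco : IsCoprime r s)
    (hroot : evalQF Q r s = 0) : ∃ a' b' : ℤ, EquivQF Q (a', b', 0) := by
  obtain ⟨p, q, hpq⟩ := hco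
  obtain ⟨A, B, C⟩ := Q
  have hdet : (-s) * (-q) - r * (-p) = 1 := by linarith [hpq]
  refine ⟨A * (-q) ^ 2 - B * (-p) * (-q) + C * (-p) ^ 2,
    -2 * A * r * (-q) + B * ((-s) * (-q) + r * (-p)) - 2 * C * (-s) * (-p),
    ⟨mk2 (-s) r (-p) (-q) hdet, ?_⟩⟩
  rw [actQF_mk2]
  refine Prod.ext rfl (Prod.ext rfl ?_)
  simp only [evalQF] at hroot
  show A * r ^ 2 - B * (-s) * r + C * (-s) ^ 2 = 0
  linear_combination hroot

/-- Flip: (A, -b, 0) ~ (a'', b, 0) for some a''. -/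
lemma flipQF (A b : ℤ) (hb : 0 < b) : ∃ a'' : ℤ, EquivQF (A, -b, 0) (a'', b, 0) := by
  have hgpos : 0 < Int.gcd A b := Int.gcd_pos_of_ne_zero_right A (by omega)
  set g : ℤ := (Int.gcd A b : ℤ) with hg
  set a₁ : ℤ := A / g with ha₁
  set b₁ : ℤ := b / g with hb₁
  have hA : A = g * a₁ := (Int.ediv_mul_cancel (Int.gcd_dvd_left A b)).symm.trans (mul_comm _ _)
  have hB : b = g * b₁ := (Int.ediv_mul_cancel (Int.gcd_dvd_right A b)).symm.trans (mul_comm _ _)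
  have hco : IsCoprime a₁ b₁ := by
    rw [Int.isCoprime_iff_gcd_eq_one]
    exact Int.gcd_div_gcd_div_gcd hgpos
  obtain ⟨p, q, hpq⟩ := hco
  have hdet : (-a₁) * (-p) - b₁ * (-q) = 1 := by linarith [hpq]
  refine ⟨A * (-p) ^ 2 - (-b) * (-q) * (-p) + 0 * (-q) ^ 2, ⟨mk2 (-a₁) b₁ (-q) (-p) hdet, ?_⟩⟩
  rw [actQF_mk2]
  refine Prod.ext rfl (Prod.ext ?_ ?_)
  · show -2 * A * b₁ * (-p) + (-b) * ((-a₁) * (-p) + b₁ * (-q)) - 2 * 0 * (-a₁) * (-q) = b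
    linear_combination (2 * b₁ * p) * hA + (-(a₁ * p - b₁ * q) - 1) * hB + (g * b₁) * hpq
  · show A * b₁ ^ 2 - (-b) * (-a₁) * b₁ + 0 * (-a₁) ^ 2 = 0
    linear_combination b₁ ^ 2 * hA - a₁ * b₁ * hB

/-- Every form of discriminant b² has a coprime root. -/
lemma exists_root (b : ℤ) (Q : ℤ × ℤ × ℤ) (hQ : discQF Q = b ^ 2) :
    ∃ r s : ℤ, IsCoprime r s ∧ evalQF Q r s = 0 := by
  obtain ⟨A, B, C⟩ := Q
  simp only [discQF] at hQ
  by_cases hA : A = 0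
  · exact ⟨1, 0, isCoprime_one_left, by simp [evalQF, hA]⟩
  · have hpar : ∃ k : ℤ, b - B = 2 * k := by
      have heven : Even ((B - b) * (B + b)) := ⟨2 * (A * C), by linear_combination hQ⟩
      rcases Int.even_mul.mp heven with h | h <;> obtain ⟨k, hk⟩ := h
      · exact ⟨-k, by omega⟩
      · exact ⟨k - B, by omega⟩
    obtain ⟨k, hk⟩ := hpar
    have hb2 : b ^ 2 = B ^ 2 + 4 * B * k + 4 * k ^ 2 := by
      have hb' : b = B + 2 * k := by omega
      rw [hb']; ring
    have hroot0 : evalQF (A, B, C) k A = 0 := by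
      simp only [evalQF]
      have h4 : 4 * (A * k ^ 2 + B * k * A + C * A ^ 2) = 0 := by
        linear_combination (-A) * hQ + (-A) * hb2
      linarith
    have hgpos : 0 < Int.gcd k A := Int.gcd_pos_of_ne_zero_right k hA
    set g : ℤ := (Int.gcd k A : ℤ) with hgdef
    have hgne : g ≠ 0 := by positivity
    set r : ℤ := k / g
    set s : ℤ := A / g
    have hk' : k = g * r := (Int.ediv_mul_cancel (Int.gcd_dvd_left k A)).symm.trans (mul_comm _ _)
    have hA' : A = g * s := (Int.ediv_mul_cancel (Int.gcd_dvd_right k A)).symm.trans (mul_comm _ _)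
    have hco : IsCoprime r s := by
      rw [Int.isCoprime_iff_gcd_eq_one]
      exact Int.gcd_div_gcd_div_gcd hgpos
    refine ⟨r, s, hco, ?_⟩
    simp only [evalQF] at hroot0 ⊢
    have h2 : g ^ 2 * (A * r ^ 2 + B * r * s + C * s ^ 2) = 0 := by
      rw [hk', hA'] at hroot0; linear_combination hroot0 + g ^ 2 * r ^ 2 * hA'
    rcases mul_eq_zero.mp h2 with h | h
    · exact absurd h (pow_ne_zero 2 hgne)
    · exact h

/-- Uniqueness within the strip. -/
lemma uniqQF {b a₁ a₂ : ℤ} (hb : 0 < b) (h1 : 0 ≤ a₁) (h2 : a₁ < b) (h3 : 0 ≤ a₂)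
    (h4 : a₂ < b) (h : EquivQF (a₁, b, 0) (a₂, b, 0)) : a₁ = a₂ := by
  obtain ⟨γ, hγ⟩ := h
  set x := γ.1 0 0; set y := γ.1 0 1; set z := γ.1 1 0; set w := γ.1 1 1
  have hdet : x * w - y * z = 1 := by
    have := γ.2; rwa [Matrix.det_fin_two] at this
  simp only [actQF, Prod.mk.injEq] at hγ
  obtain ⟨e1, e2, e3⟩ := hγ
  have hy : y = 0 := by
    by_contra hy
    rcases mul_eq_zero.mp (show y * (a₁ * y - b * x) = 0 by linear_combination e3) with h | h
    · exact hy h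
    · have : (2 : ℤ) * b = 0 := by linear_combination -e2 - 2 * w * h - b * hdet
      omega
  have hxw : x * w = 1 := by rw [hy] at hdet; linarith
  have hw2 : w ^ 2 = 1 := by
    rcases Int.mul_eq_one_iff_eq_one_or_neg_one.mp hxw with ⟨_, hw⟩ | ⟨_, hw⟩ <;> rw [hw] <;> ring
  have he : a₁ - a₂ = b * (z * w) := by linear_combination e1 - a₁ * hw2
  have hmlt : z * w < 1 :=
    lt_of_mul_lt_mul_left (by linarith : b * (z * w) < b * 1) (le_of_lt hb)
  have hmgt : -1 < z * w :=
    lt_of_mul_lt_mul_left (by linarith : b * (-1) < b * (z * w)) (le_of_lt hb)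
  have hm0 : z * w = 0 := by omega
  rw [hm0, mul_zero] at he
  omega

/-- `{[a,b,0] : 0 ≤ a < b}` is a complete set of representatives for
`Γ\𝒬_{b²}`. -/
theorem stmt0 (b : ℤ) (hb : 0 < b) (Q : ℤ × ℤ × ℤ) (hQ : discQF Q = b ^ 2) :
    ∃! a : ℤ, 0 ≤ a ∧ a < b ∧ EquivQF Q (a, b, 0) := by
  obtain ⟨r, s, hco, hroot⟩ := exists_root b Q hQ
  obtain ⟨a', b', hE⟩ := equiv_of_root hco hroot
  have hdisc : b' ^ 2 = b ^ 2 := by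
    obtain ⟨γ, hγ⟩ := hE
    have h := discQF_actQF γ Q
    rw [hγ, hQ] at h
    simp only [discQF] at h
    linear_combination h
  have hE2 : ∃ a'' : ℤ, EquivQF Q (a'', b, 0) := by
    have hcases : b' = b ∨ b' = -b := by
      rcases mul_eq_zero.mp (show (b' - b) * (b' + b) = 0 by linear_combination hdisc)
        with h | h
      · exact Or.inl (by omega)
      · exact Or.inr (by omega)
    rcases hcases with h | h
    · exact ⟨a', h ▸ hE⟩
    · obtain ⟨a'', hf⟩ := flipQF a' b hb
      exact ⟨a'', equivQF_trans (h ▸ hE) hf⟩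
  obtain ⟨a'', hE2⟩ := hE2
  have hshift : EquivQF (a'', b, 0) (a'' % b, b, 0) := by
    have h := shiftQF a'' b (a'' / b)
    rwa [← Int.emod_def] at h
  have hfin : EquivQF Q (a'' % b, b, 0) := equivQF_trans hE2 hshift
  have hnn : 0 ≤ a'' % b := Int.emod_nonneg _ (by omega)
  have hlt : a'' % b < b := Int.emod_lt_of_pos _ hb
  refine ⟨a'' % b, ⟨hnn, hlt, hfin⟩, ?_⟩
  rintro y ⟨hy1, hy2, hy3⟩
  exact uniqQF hb hy1 hy2 hnn hlt (equivQF_trans (equivQF_symm hy3) hfin)
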